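/- arXiv:1312.5509 — 5 statements merged into one kernel-verified Lean document; each statement's English description precedes it below -/
import Mathlib

section
/- Let R be a noetherian integral domain that is not a field. Then Hom_R(K, R) = 0, where K is the field of fractions of R. -/
theorem hom_fractionField_eq_zero
    (R : Type*) [CommRing R] [IsDomain R] [IsNoetherianRing R] (hR : ¬ IsField R)
    (f : FractionRing R →ₗ[R] R) : f = 0 := by
  obtain ⟨t, ht0, htu⟩ := Ring.exists_not_isUnit_of_not_isField hR
  have hI : Ideal.span {t} ≠ ⊤ := by rwa [Ne, Ideal.span_singleton_eq_top]
  have hbot := Ideal.iInf_pow_eq_bot_of_isDomain (Ideal.span {t}) hI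
  ext x
  have htK : (algebraMap R (FractionRing R)) t ≠ 0 := by
    simpa using (map_ne_zero_iff _ (IsFractionRing.injective R (FractionRing R))).mpr ht0
  have hmem : f x ∈ ⨅ i : ℕ, (Ideal.span {t}) ^ i := by
    refine Ideal.mem_iInf.mpr fun n => ?_
    have hx : (t ^ n) • (x / (algebraMap R (FractionRing R) t) ^ n) = x := by
      rw [Algebra.smul_def, map_pow, mul_div_cancel₀]
      exact pow_ne_zero n htK
    have : f x = t ^ n * f (x / (algebraMap R (FractionRing R) t) ^ n) := by
      conv_lhs => rw [← hx, map_smul, smul_eq_mul]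
    rw [this]
    exact Ideal.mul_mem_right _ _ (Ideal.pow_mem_pow (Ideal.mem_span_singleton_self t) n)
  rw [hbot] at hmem
  simpa using hmem
end

section
/- Let R be a noetherian integral domain that is not a field. Then the adic completion lim_{s ∈ R\{0}} R/sR is uncountable. -/
open Ideal CategoryTheory

/-- Compatibility with the transition maps `R/tR → R/sR` (for `s ∣ t`) of the inverse system
indexed by the nonzero elements of `R` preordered by divisibility. -/
def AdicCompat (R : Type) [CommRing R] (g : ∀ s : R, R ⧸ Ideal.span {s}) : Prop :=
  ∀ s t : R, s ≠ 0 → t ≠ 0 → ∀ h : s ∣ t,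
    Ideal.Quotient.factor
      (Ideal.span_singleton_le_span_singleton.mpr h) (g t) = g s

/-- The adic completion `lim_{s ∈ R \ {0}} R/sR`, as a submodule of the product. -/
def adicCompl (R : Type) [CommRing R] : Submodule R (∀ s : R, R ⧸ Ideal.span {s}) where
  carrier := {g | AdicCompat R g}
  zero_mem' := fun s t hs ht h => by simp
  add_mem' := fun {a b} ha hb s t hs ht h => by
    simp only [Pi.add_apply, map_add, ha s t hs ht h, hb s t hs ht h]
  smul_mem' := fun r g hg s t hs ht h => by
    have h2 := hg s t hs ht h
    obtain ⟨x, hx⟩ := Ideal.Quotient.mk_surjective (g t)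
    rw [Pi.smul_apply, Pi.smul_apply, ← h2, ← hx]
    rw [show r • Ideal.Quotient.mk (Ideal.span {t}) x = Ideal.Quotient.mk _ (r * x) from rfl,
      Ideal.Quotient.factor_mk, Ideal.Quotient.factor_mk]
    rfl

/-- The canonical diagonal map `R → lim_{s} R/sR`. -/
def adicDiag (R : Type) [CommRing R] : R →ₗ[R] adicCompl R where
  toFun a := ⟨fun _ => Ideal.Quotient.mk _ a, fun _ _ _ _ _ => Ideal.Quotient.factor_mk _ a⟩
  map_add' a b := by apply Subtype.ext; funext s; exact map_add _ a b
  map_smul' r a := rfl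

/-- `Ext^1_R(K, R)` where `K` is the fraction field of `R`. -/
noncomputable def ext1 (R : Type) [CommRing R] [IsDomain R] : ModuleCat R :=
  ((Ext R (ModuleCat R) 1).obj (Opposite.op (ModuleCat.of R (FractionRing R)))).obj
    (ModuleCat.of R R)

namespace AdicUnc

lemma uncountable_set_nat : Uncountable (Set ℕ) := by
  rw [← not_countable_iff]
  intro h
  obtain ⟨f, hf⟩ := Countable.exists_injective_nat (Set ℕ)
  exact Function.cantor_injective f hf

open Classical
set_option linter.unusedSectionVars false

variable {R : Type} [CommRing R] [IsDomain R]

/-- The cofinal chain built from a nonunit `r` and an enumeration `v` of nonzero elements. -/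
noncomputable def tt (r : R) (v : ℕ → R) (n : ℕ) : R :=
  r ^ (n + 1) * ∏ k ∈ Finset.range n, v k

lemma tt_ne_zero {r : R} {v : ℕ → R} (hr : r ≠ 0) (hv : ∀ k, v k ≠ 0) (n : ℕ) :
    tt r v n ≠ 0 :=
  mul_ne_zero (pow_ne_zero _ hr) (Finset.prod_ne_zero_iff.mpr fun k _ => hv k)

lemma tt_succ (r : R) (v : ℕ → R) (n : ℕ) :
    tt r v (n + 1) = tt r v n * (r * v n) := by
  simp only [tt, Finset.prod_range_succ, pow_succ]
  ring

lemma tt_dvd (r : R) (v : ℕ → R) {n m : ℕ} (h : n ≤ m) : tt r v n ∣ tt r v m := by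
  induction m with
  | zero => simp [Nat.le_zero.mp h]
  | succ m ih =>
    rcases Nat.lt_or_ge n (m + 1) with h' | h'
    · exact (ih (Nat.lt_succ_iff.mp h')).trans ⟨r * v m, tt_succ r v m⟩
    · have : n = m + 1 := le_antisymm h h'
      subst this; exact dvd_refl _

lemma dvd_tt (r : R) (v : ℕ → R) {k n : ℕ} (h : k < n) : v k ∣ tt r v n :=
  (Finset.dvd_prod_of_mem v (Finset.mem_range.mpr h)).trans (dvd_mul_left _ _)

lemma not_tt_succ_dvd {r : R} {v : ℕ → R} (hr : r ≠ 0) (hv : ∀ k, v k ≠ 0)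
    (hru : ¬ IsUnit r) (n : ℕ) : ¬ tt r v (n + 1) ∣ tt r v n := by
  rintro ⟨c, hc⟩
  rw [tt_succ] at hc
  have : tt r v n * 1 = tt r v n * (r * (v n * c)) := by
    conv_lhs => rw [mul_one, hc]
    ring
  have h1 : (1 : R) = r * (v n * c) := mul_left_cancel₀ (tt_ne_zero hr hv n) this
  exact hru (IsUnit.of_mul_eq_one (a := r) (v n * c) h1.symm)

/-- Partial sums of selected chain elements. -/
noncomputable def aa (t : ℕ → R) (ε : Set ℕ) (n : ℕ) : R :=
  ∑ k ∈ Finset.range n, (if k ∈ ε then t k else 0)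

lemma tt_dvd_aa_sub (r : R) (v : ℕ → R) (ε : Set ℕ) {n m : ℕ} (h : n ≤ m) :
    tt r v n ∣ aa (tt r v) ε m - aa (tt r v) ε n := by
  rw [aa, aa, ← Finset.sum_Ico_eq_sub _ h]
  refine Finset.dvd_sum fun k hk => ?_
  have hnk : n ≤ k := (Finset.mem_Ico.mp hk).1
  split
  · exact tt_dvd r v hnk
  · exact dvd_zero _

/-- An index `n` such that `s ∣ tt r v n`, when one exists. -/
noncomputable def NN (r : R) (v : ℕ → R) (s : R) : ℕ :=
  if h : ∃ n, s ∣ tt r v n then h.choose else 0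

lemma dvd_tt_NN {r : R} {v : ℕ → R} {s : R} (h : ∃ n, s ∣ tt r v n) :
    s ∣ tt r v (NN r v s) := by
  rw [NN, dif_pos h]
  exact h.choose_spec

/-- The element of the adic completion associated to a set of naturals. -/
noncomputable def gg (r : R) (v : ℕ → R) (ε : Set ℕ) (s : R) : R ⧸ Ideal.span {s} :=
  Ideal.Quotient.mk _ (aa (tt r v) ε (NN r v s))

lemma gg_eq_mk (r : R) (v : ℕ → R) (ε : Set ℕ) {s : R}
    (hex : ∃ n, s ∣ tt r v n) {n : ℕ} (hn : s ∣ tt r v n) :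
    Ideal.Quotient.mk (Ideal.span {s}) (aa (tt r v) ε n) = gg r v ε s := by
  rw [gg, Ideal.Quotient.eq, Ideal.mem_span_singleton]
  have h1 : tt r v n ∣ aa (tt r v) ε (max n (NN r v s)) - aa (tt r v) ε n :=
    tt_dvd_aa_sub r v ε (le_max_left _ _)
  have h2 : tt r v (NN r v s) ∣
      aa (tt r v) ε (max n (NN r v s)) - aa (tt r v) ε (NN r v s) :=
    tt_dvd_aa_sub r v ε (le_max_right _ _)
  have heq : aa (tt r v) ε n - aa (tt r v) ε (NN r v s) =
      (aa (tt r v) ε (max n (NN r v s)) - aa (tt r v) ε (NN r v s)) -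
      (aa (tt r v) ε (max n (NN r v s)) - aa (tt r v) ε n) := by ring
  rw [heq]
  exact dvd_sub ((dvd_tt_NN hex).trans h2) (hn.trans h1)

lemma gg_compat (r : R) (v : ℕ → R) (ε : Set ℕ)
    (hcof : ∀ s : R, s ≠ 0 → ∃ n, s ∣ tt r v n) : AdicCompat R (gg r v ε) := by
  intro s t hs ht hdvd
  rw [gg, Ideal.Quotient.factor_mk]
  exact gg_eq_mk r v ε (hcof s hs) (hdvd.trans (dvd_tt_NN (hcof t ht)))

lemma gg_injective {r : R} {v : ℕ → R} (hr : r ≠ 0) (hv : ∀ k, v k ≠ 0)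
    (hru : ¬ IsUnit r) : Function.Injective (gg r v) := by
  intro ε ε' h
  by_contra hne
  have hex : ∃ k, ¬ ((k ∈ ε) ↔ (k ∈ ε')) := by
    by_contra hco
    push_neg at hco
    exact hne (Set.ext fun k => hco k)
  set k := Nat.find hex with hk
  have hkspec : ¬ ((k ∈ ε) ↔ (k ∈ ε')) := Nat.find_spec hex
  have hkmin : ∀ j < k, ((j ∈ ε) ↔ (j ∈ ε')) := by
    intro j hj
    by_contra hj'
    exact Nat.find_min hex hj hj'
  -- compute the difference of partial sums at stage k+1
  have hdiff : aa (tt r v) ε (k + 1) - aa (tt r v) ε' (k + 1) =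
      (if k ∈ ε then tt r v k else 0) - (if k ∈ ε' then tt r v k else 0) := by
    rw [aa, aa, Finset.sum_range_succ, Finset.sum_range_succ]
    have : ∑ j ∈ Finset.range k, (if j ∈ ε then tt r v j else 0) =
        ∑ j ∈ Finset.range k, (if j ∈ ε' then tt r v j else 0) := by
      refine Finset.sum_congr rfl fun j hj => ?_
      have := hkmin j (Finset.mem_range.mp hj)
      by_cases h' : j ∈ ε
      · rw [if_pos h', if_pos (this.mp h')]
      · rw [if_neg h', if_neg (fun h'' => h' (this.mpr h''))]
    rw [this]
    ring
  -- from equality of the limit elements at index tt r v (k+1)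
  have hs : tt r v (k + 1) ≠ 0 := tt_ne_zero hr hv (k + 1)
  have hex1 : ∃ n, tt r v (k + 1) ∣ tt r v n := ⟨k + 1, dvd_refl _⟩
  have e1 := gg_eq_mk (ε := ε) r v (s := tt r v (k + 1)) hex1 (dvd_refl _)
  have e2 := gg_eq_mk (ε := ε') r v (s := tt r v (k + 1)) hex1 (dvd_refl _)
  have e3 : Ideal.Quotient.mk (Ideal.span {tt r v (k + 1)}) (aa (tt r v) ε (k + 1)) =
      Ideal.Quotient.mk (Ideal.span {tt r v (k + 1)}) (aa (tt r v) ε' (k + 1)) := by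
    rw [e1, e2, h]
  rw [Ideal.Quotient.eq, Ideal.mem_span_singleton, hdiff] at e3
  -- e3 : tt r v (k+1) ∣ ± tt r v k, contradiction
  have hdvdk : tt r v (k + 1) ∣ tt r v k := by
    by_cases h1 : k ∈ ε <;> by_cases h2 : k ∈ ε'
    · exact absurd (iff_of_true h1 h2) hkspec
    · rw [if_pos h1, if_neg h2, sub_zero] at e3; exact e3
    · rw [if_neg h1, if_pos h2, zero_sub, dvd_neg] at e3; exact e3
    · exact absurd (iff_of_false h1 h2) hkspec
  exact not_tt_succ_dvd hr hv hru k hdvdk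

end AdicUnc

theorem adicCompletion_uncountable
    (R : Type) [CommRing R] [IsDomain R] [IsNoetherianRing R] (hR : ¬ IsField R) :
    Uncountable (adicCompl R) := by
  classical
  obtain ⟨r, hr0, hru⟩ := Ring.exists_not_isUnit_of_not_isField hR
  by_cases hcnt : Countable R
  · -- countable case: build uncountably many elements from a cofinal chain
    haveI := hcnt
    obtain ⟨u, hu⟩ := exists_surjective_nat R
    let v : ℕ → R := fun k => if u k = 0 then 1 else u k
    have hvne : ∀ k, v k ≠ 0 := by
      intro k
      by_cases h : u k = 0 <;> simp [v, h]
    have hcof : ∀ s : R, s ≠ 0 → ∃ n, s ∣ AdicUnc.tt r v n := by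
      intro s hs
      obtain ⟨k, hk⟩ := hu s
      refine ⟨k + 1, ?_⟩
      have hv : v k = s := by simp [v, hk, hs]
      rw [← hv]
      exact AdicUnc.dvd_tt r v (Nat.lt_succ_self k)
    have hmem : ∀ ε : Set ℕ, AdicUnc.gg r v ε ∈ adicCompl R :=
      fun ε => AdicUnc.gg_compat r v ε hcof
    have hF : Function.Injective
        (fun ε : Set ℕ => (⟨AdicUnc.gg r v ε, hmem ε⟩ : adicCompl R)) := by
      intro ε ε' h
      exact AdicUnc.gg_injective hr0 hvne hru (congrArg Subtype.val h)
    haveI := AdicUnc.uncountable_set_nat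
    exact hF.uncountable
  · -- uncountable case: `R` itself embeds into the completion
    haveI : Uncountable R := not_countable_iff.mp hcnt
    have hinj : Function.Injective (fun x : R => adicDiag R x) := by
      intro x y h
      by_contra hxy
      have h2 : Ideal.Quotient.mk (Ideal.span {(x - y) * r}) x
          = Ideal.Quotient.mk (Ideal.span {(x - y) * r}) y :=
        by have := congrFun (congrArg Subtype.val h) ((x - y) * r); exact this
      rw [Ideal.Quotient.eq, Ideal.mem_span_singleton] at h2
      obtain ⟨c, hc⟩ := h2
      have hxy0 : x - y ≠ 0 := sub_ne_zero.mpr hxy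
      have hcc : (x - y) * (r * c) = (x - y) * 1 := by
        rw [← mul_assoc, ← hc, mul_one]
      exact hru (IsUnit.of_mul_eq_one (a := r) c (mul_left_cancel₀ hxy0 hcc))
    exact hinj.uncountable
end

section
/- Let R be a UFD, t a prime element of R, and P a submonoid of R \ {0} such that some p ∈ P generates together with t a proper ideal (t,p)R ⊂ R. Then the intersection over p ∈ P of the images of multiplication-by-p maps on R/tR is zero. -/
theorem iInf_range_mul_eq_bot
    (R : Type*) [CommRing R] [IsDomain R] [IsNoetherianRing R] [UniqueFactorizationMonoid R]
    (t : R) (ht : Prime t) (P : Submonoid R) (hP0 : (0 : R) ∉ P)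
    (hp : ∃ p ∈ P, Ideal.span {t, p} ≠ ⊤) :
    (⨅ p ∈ P,
      LinearMap.range (LinearMap.mulLeft R (Ideal.Quotient.mk (Ideal.span {t}) p))) = ⊥ := by
  obtain ⟨p, hpP, hprop⟩ := hp
  set S := R ⧸ Ideal.span {t}
  have hprime : (Ideal.span {t}).IsPrime := by
    rwa [Ideal.span_singleton_prime ht.ne_zero]
  haveI : IsDomain S := Ideal.Quotient.isDomain _
  haveI : IsNoetherianRing S := Ideal.Quotient.isNoetherianRing _
  set q : S := Ideal.Quotient.mk (Ideal.span {t}) p with hq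
  set I : Ideal S := Ideal.span {q} with hI
  have hIne : I ≠ ⊤ := by
    intro h
    apply hprop
    rw [Ideal.eq_top_iff_one] at h ⊢
    rw [hI, Ideal.mem_span_singleton] at h
    obtain ⟨c, hc⟩ := h
    obtain ⟨c', rfl⟩ := Ideal.Quotient.mk_surjective c
    have : Ideal.Quotient.mk (Ideal.span {t}) (1 - p * c') = 0 := by
      rw [map_sub, map_mul, map_one, ← hc]; ring
    rw [Ideal.Quotient.eq_zero_iff_mem, Ideal.mem_span_singleton] at this
    obtain ⟨d, hd⟩ := this
    have : (1 : R) = t * d + p * c' := by linear_combination hd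
    rw [this]
    exact add_mem (Ideal.mul_mem_right _ _ (Ideal.subset_span (by simp)))
      (Ideal.mul_mem_right _ _ (Ideal.subset_span (by simp)))
  have hKrull : (⨅ n : ℕ, I ^ n) = ⊥ := Ideal.iInf_pow_eq_bot_of_isDomain I hIne
  rw [eq_bot_iff]
  intro x hx
  simp only [Submodule.mem_iInf, LinearMap.mem_range] at hx
  have hx' : x ∈ (⨅ n : ℕ, I ^ n) := by
    rw [Submodule.mem_iInf]
    intro n
    obtain ⟨y, hy⟩ := hx (p ^ n) (pow_mem hpP n)
    rw [LinearMap.mulLeft_apply] at hy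
    rw [hI, Ideal.span_singleton_pow, Ideal.mem_span_singleton]
    exact ⟨y, by rw [← hy, hq, map_pow]⟩
  rw [hKrull] at hx'
  simpa using hx'
end

section
/- Let R' be a free module over a commutative ring R, and let (V_s) be an inverse system of R-modules indexed by a directed preorder. Then the canonical map R' ⊗_R lim V_s → lim (R' ⊗_R V_s) is injective. -/
/-- The inverse limit of an inverse system `(V s)` of `R`-modules over a preorder `ι`,
with transition maps `T h : V t →ₗ[R] V s` for `h : s ≤ t`, as a submodule of the product. -/
def invLimit (R : Type*) [CommRing R] {ι : Type*} [Preorder ι]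
    (V : ι → Type*) [∀ s, AddCommGroup (V s)] [∀ s, Module R (V s)]
    (T : ∀ {s t : ι}, s ≤ t → (V t →ₗ[R] V s)) : Submodule R (∀ s, V s) where
  carrier := {f | ∀ (s t : ι) (h : s ≤ t), T h (f t) = f s}
  zero_mem' := fun s t h => by simp
  add_mem' := fun {a b} ha hb s t h => by simp [ha s t h, hb s t h]
  smul_mem' := fun r f hf s t h => by simp [hf s t h]

open TensorProduct in
/-- Naturality of the free-module coordinate equivalence with respect to `lTensor`. -/
lemma tensor_coord_natural
    {R : Type*} [CommRing R]
    {R' : Type*} [AddCommGroup R'] [Module R R']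
    {κ : Type*} [DecidableEq κ] (b : Module.Basis κ R R')
    {M N : Type*} [AddCommGroup M] [Module R M] [AddCommGroup N] [Module R N]
    (f : M →ₗ[R] N) (z : R' ⊗[R] M) (k : κ) :
    finsuppScalarLeft R N κ
        (LinearMap.rTensor N b.repr.toLinearMap (LinearMap.lTensor R' f z)) k
      = f (finsuppScalarLeft R M κ (LinearMap.rTensor M b.repr.toLinearMap z) k) := by
  induction z with
  | zero => simp
  | add x y hx hy => simp [hx, hy, map_add]
  | tmul x m => simp [finsuppScalarLeft_apply_tmul_apply]

theorem tensor_invLimit_injective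
    (R : Type*) [CommRing R]
    (R' : Type*) [AddCommGroup R'] [Module R R'] [Module.Free R R']
    (ι : Type*) [Preorder ι] [IsDirected ι (· ≤ ·)]
    (V : ι → Type*) [∀ s, AddCommGroup (V s)] [∀ s, Module R (V s)]
    (T : ∀ {s t : ι}, s ≤ t → (V t →ₗ[R] V s))
    (hT_id : ∀ s : ι, T (le_refl s) = LinearMap.id)
    (hT_comp : ∀ {s t u : ι} (h1 : s ≤ t) (h2 : t ≤ u),
      (T h1).comp (T h2) = T (h1.trans h2)) :
    Function.Injective
      (LinearMap.pi fun s : ι =>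
        LinearMap.lTensor R' ((LinearMap.proj s).comp (invLimit R V @T).subtype)) := by
  classical
  set L := invLimit R V @T
  obtain ⟨κ, b⟩ := Module.Free.exists_basis (R := R) (M := R')
  haveI : DecidableEq κ := Classical.decEq κ
  rw [injective_iff_map_eq_zero]
  intro z hz
  -- coordinates of z
  set w : κ →₀ L := TensorProduct.finsuppScalarLeft R L κ
    (LinearMap.rTensor L b.repr.toLinearMap z) with hw
  have hwz : ∀ k, w k = 0 := by
    intro k
    have hk : ∀ s : ι, ((w k : ∀ s, V s)) s = 0 := by
      intro s
      have h0 : LinearMap.lTensor R' ((LinearMap.proj s).comp L.subtype) z = 0 := by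
        simpa using congrFun hz s
      have := tensor_coord_natural b ((LinearMap.proj s).comp L.subtype) z k
      rw [h0] at this
      simpa [hw] using this.symm
    ext s
    exact hk s
  have hz0 : LinearMap.rTensor L b.repr.toLinearMap z = 0 := by
    apply (TensorProduct.finsuppScalarLeft R L κ).injective
    simpa [← hw] using Finsupp.ext hwz
  have : Function.Injective (LinearMap.rTensor L b.repr.toLinearMap) :=
    (LinearEquiv.injective (LinearEquiv.rTensor L b.repr))
  exact this (by simpa using hz0)
end

section
/- Let k be an algebraically closed field, R = k[X_1, X_2], and t an irreducible polynomial not in the maximal ideal (X_1, X_2). Then there exists a point α = (α_1, α_2) ≠ (0,0) with t(α) = 0, and the linear form p = α_2 X_1 − α_1 X_2 is irreducible, lies in (X_1, X_2), and (t, p)R is a proper ideal (both lie in the maximal ideal (X_1 − α_1, X_2 − α_2)). -/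
open MvPolynomial

section Aux

variable {k : Type*} [Field k]

private lemma mem_span_lin (α : Fin 2 → k) (p : MvPolynomial (Fin 2) k) :
    p - C (eval α p) ∈
      Ideal.span {(X 0 - C (α 0) : MvPolynomial (Fin 2) k), X 1 - C (α 1)} := by
  set I := Ideal.span {(X 0 - C (α 0) : MvPolynomial (Fin 2) k), X 1 - C (α 1)} with hI
  have hX : ∀ i : Fin 2, (X i - C (α i) : MvPolynomial (Fin 2) k) ∈ I := by
    intro i
    fin_cases i
    · exact Ideal.subset_span (by left; rfl)
    · exact Ideal.subset_span (by right; rfl)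
  induction p using MvPolynomial.induction_on with
  | C a => simp
  | add p q hp hq =>
      have h := I.add_mem hp hq
      have : p + q - C (eval α (p + q)) =
          (p - C (eval α p)) + (q - C (eval α q)) := by
        rw [map_add, map_add]; ring
      rw [this]; exact h
  | mul_X p i hp =>
      have : p * X i - C (eval α (p * X i)) =
          (p - C (eval α p)) * X i + C (eval α p) * (X i - C (α i)) := by
        rw [eval_mul, eval_X, map_mul]; ring
      rw [this]
      exact I.add_mem (I.mul_mem_right _ hp) (I.mul_mem_left _ (hX i))

private lemma span_eq_vanishing (α : Fin 2 → k) :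
    Ideal.span {(X 0 - C (α 0) : MvPolynomial (Fin 2) k), X 1 - C (α 1)} =
      vanishingIdeal k {α} := by
  apply le_antisymm
  · rw [Ideal.span_le]
    rintro q hq
    simp only [Set.mem_insert_iff, Set.mem_singleton_iff] at hq
    rw [SetLike.mem_coe, mem_vanishingIdeal_singleton_iff]
    rcases hq with rfl | rfl <;> simp
  · intro q hq
    rw [mem_vanishingIdeal_singleton_iff] at hq; change (eval α) q = 0 at hq
    have h := mem_span_lin α q
    rwa [hq, map_zero, sub_zero] at h

private lemma mem_span_lin_iff (α : Fin 2 → k) (p : MvPolynomial (Fin 2) k) :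
    p ∈ Ideal.span {(X 0 - C (α 0) : MvPolynomial (Fin 2) k), X 1 - C (α 1)} ↔
      eval α p = 0 := by
  rw [span_eq_vanishing, mem_vanishingIdeal_singleton_iff]; exact Iff.rfl

private lemma irreducible_X_fin2 (k : Type*) [Field k] (i : Fin 2) :
    Irreducible (X i : MvPolynomial (Fin 2) k) := by
  have h0 : Irreducible (X 0 : MvPolynomial (Fin 2) k) := by
    rw [← MulEquiv.irreducible_iff (MvPolynomial.finSuccEquiv k 1).toMulEquiv]
    have : (MvPolynomial.finSuccEquiv k 1).toMulEquiv (X 0) = Polynomial.X :=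
      finSuccEquiv_X_zero
    rw [this]
    exact Polynomial.irreducible_X
  have h := (MulEquiv.irreducible_iff
    (renameEquiv k (Equiv.swap (0 : Fin 2) i)).toMulEquiv).mpr h0
  simpa using h

private lemma irreducible_X_sub_smul_X (c : k) :
    Irreducible (X 0 - C c * X 1 : MvPolynomial (Fin 2) k) := by
  rw [← MulEquiv.irreducible_iff (MvPolynomial.finSuccEquiv k 1).toMulEquiv]
  have h1 : (X 1 : MvPolynomial (Fin 2) k) = X (Fin.succ 0) := rfl
  have : (MvPolynomial.finSuccEquiv k 1).toMulEquiv (X 0 - C c * X 1) =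
      Polynomial.X - Polynomial.C (C c * X 0) := by
    show (MvPolynomial.finSuccEquiv k 1) (X 0 - C c * X 1) = _
    rw [map_sub, map_mul, finSuccEquiv_X_zero, h1, finSuccEquiv_X_succ]
    have hc : ((MvPolynomial.finSuccEquiv k 1) (C c) : Polynomial (MvPolynomial (Fin 1) k)) =
        Polynomial.C (C c) := by rw [finSuccEquiv_apply, eval₂Hom_C]; rfl
    rw [hc, ← Polynomial.C_mul]
  rw [this]
  exact Polynomial.irreducible_X_sub_C _

end Aux

theorem exists_zero_and_linear_form
    (k : Type*) [Field k] [IsAlgClosed k]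
    (t : MvPolynomial (Fin 2) k) (hirr : Irreducible t)
    (ht : t ∉ Ideal.span {(X 0 : MvPolynomial (Fin 2) k), X 1}) :
    ∃ α : Fin 2 → k, α ≠ 0 ∧ eval α t = 0 ∧
      (Irreducible (C (α 1) * X 0 - C (α 0) * X 1 : MvPolynomial (Fin 2) k) ∧
       (C (α 1) * X 0 - C (α 0) * X 1 : MvPolynomial (Fin 2) k) ∈
          Ideal.span {(X 0 : MvPolynomial (Fin 2) k), X 1} ∧
       Ideal.span {t, C (α 1) * X 0 - C (α 0) * X 1} ≠ ⊤ ∧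
       t ∈ Ideal.span {(X 0 - C (α 0) : MvPolynomial (Fin 2) k), X 1 - C (α 1)} ∧
       (C (α 1) * X 0 - C (α 0) * X 1 : MvPolynomial (Fin 2) k) ∈
          Ideal.span {(X 0 - C (α 0) : MvPolynomial (Fin 2) k), X 1 - C (α 1)} ∧
       (Ideal.span {(X 0 - C (α 0) : MvPolynomial (Fin 2) k), X 1 - C (α 1)}).IsMaximal) := by
  -- existence of a zero of t
  obtain ⟨α, hα⟩ : ∃ α : Fin 2 → k, eval α t = 0 := by
    by_contra h
    push_neg at h
    have hempty : MvPolynomial.zeroLocus k (Ideal.span {t}) = ∅ := by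
      ext x
      simp only [Set.mem_empty_iff_false, iff_false]
      intro hx
      exact h x (mem_zeroLocus_iff.mp hx t (Ideal.subset_span rfl))
    have hrad := vanishingIdeal_zeroLocus_eq_radical (K := k) (Ideal.span {t})
    rw [hempty, vanishingIdeal_empty] at hrad
    have : Ideal.span {t} = ⊤ := Ideal.radical_eq_top.mp hrad.symm
    exact hirr.not_isUnit (Ideal.span_singleton_eq_top.mp this)
  -- t lies in the maximal ideal at α
  have htM : t ∈ Ideal.span {(X 0 - C (α 0) : MvPolynomial (Fin 2) k), X 1 - C (α 1)} :=
    (mem_span_lin_iff α t).mpr hα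
  -- α ≠ 0
  have hα0 : α ≠ 0 := by
    rintro rfl
    apply ht
    have := htM
    simpa using this
  -- the linear form
  set p : MvPolynomial (Fin 2) k := C (α 1) * X 0 - C (α 0) * X 1 with hp
  have hpM : p ∈ Ideal.span {(X 0 - C (α 0) : MvPolynomial (Fin 2) k), X 1 - C (α 1)} := by
    rw [mem_span_lin_iff]
    simp [hp, mul_comm]
  have hmax : (Ideal.span {(X 0 - C (α 0) : MvPolynomial (Fin 2) k),
      X 1 - C (α 1)}).IsMaximal := by
    rw [span_eq_vanishing]
    exact inferInstance
  refine ⟨α, hα0, hα, ?_, ?_, ?_, htM, hpM, hmax⟩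
  · -- irreducibility of p
    rcases Function.ne_iff.mp hα0 with ⟨i, hi⟩
    simp only [Pi.zero_apply] at hi
    by_cases h1 : α 1 ≠ 0
    · have hq : p = C (α 1) * (X 0 - C (α 0 * (α 1)⁻¹) * X 1) := by
        rw [hp, mul_sub, ← mul_assoc, ← C_mul]
        rw [show α 1 * (α 0 * (α 1)⁻¹) = α 0 by field_simp]
      rw [← hp, hq, irreducible_isUnit_mul (IsUnit.map C (isUnit_iff_ne_zero.mpr h1))]
      exact irreducible_X_sub_smul_X _
    · push_neg at h1
      have h0 : α 0 ≠ 0 := by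
        fin_cases i
        · exact hi
        · exact absurd h1 hi
      have hq : p = C (-(α 0)) * X 1 := by
        rw [hp, h1, C_0, map_neg]; ring
      rw [← hp, hq, irreducible_isUnit_mul (IsUnit.map C (isUnit_iff_ne_zero.mpr (neg_ne_zero.mpr h0)))]
      exact irreducible_X_fin2 k 1
  · -- p ∈ (X0, X1)
    rw [Ideal.mem_span_pair]
    exact ⟨C (α 1), -C (α 0), by ring⟩
  · -- span {t, p} ≠ ⊤
    intro htop
    have hle : Ideal.span {t, p} ≤
        Ideal.span {(X 0 - C (α 0) : MvPolynomial (Fin 2) k), X 1 - C (α 1)} := by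
      rw [Ideal.span_le]
      rintro q hq
      simp only [Set.mem_insert_iff, Set.mem_singleton_iff] at hq
      rcases hq with rfl | rfl
      · exact htM
      · exact hpM
    exact hmax.ne_top (top_unique (htop ▸ hle))
end
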